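/- For k = a + ib with a, b ∈ ℝ, ab ≠ 0, and c, d ∈ ℂ nonzero, the squared modulus of the one-soliton solution u(x,t) = c d (k² − (k̄)²)/( |k|² [ k̄ |d|² e^{−i(k²x + t/k²)} − k |c|² e^{−i((k̄)²x + t/(k̄)²)} ] ) equals 8a²b²/((a²+b²)³) · 1/( cosh(4abx − 4abt/(a²+b²)² + 2 ln(|d|/|c|)) − (a²−b²)/(a²+b²) ), wherever the denominator is nonzero. -/

import Mathlib

open Complex

/-- The one-soliton solution of the Fokas-Lenells equation with `k = a + ib`. -/
noncomputable def oneSoliton (k c d : ℂ) (x t : ℝ) : ℂ :=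
  c * d * (k ^ 2 - (starRingEnd ℂ k) ^ 2) /
    (((Complex.normSq k : ℝ) : ℂ) *
      (starRingEnd ℂ k * ((Complex.normSq d : ℝ) : ℂ) *
          Complex.exp (-I * (k ^ 2 * (x : ℂ) + (t : ℂ) / k ^ 2))
        - k * ((Complex.normSq c : ℝ) : ℂ) *
          Complex.exp (-I * ((starRingEnd ℂ k) ^ 2 * (x : ℂ) + (t : ℂ) / (starRingEnd ℂ k) ^ 2))))

theorem oneSoliton_envelope (a b : ℝ) (hab : a * b ≠ 0) (c d : ℂ) (hc : c ≠ 0) (hd : d ≠ 0) :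
    ∀ x t : ℝ,
      (((Complex.normSq (a + b * I) : ℝ) : ℂ) *
        (starRingEnd ℂ (a + b * I) * ((Complex.normSq d : ℝ) : ℂ) *
            Complex.exp (-I * ((a + b * I) ^ 2 * (x : ℂ) + (t : ℂ) / (a + b * I) ^ 2))
          - (a + b * I) * ((Complex.normSq c : ℝ) : ℂ) *
            Complex.exp (-I * ((starRingEnd ℂ (a + b * I)) ^ 2 * (x : ℂ)
              + (t : ℂ) / (starRingEnd ℂ (a + b * I)) ^ 2))) ≠ 0) →
      Complex.normSq (oneSoliton (a + b * I) c d x t)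
        = 8 * a ^ 2 * b ^ 2 / (a ^ 2 + b ^ 2) ^ 3 *
          (1 / (Real.cosh (4 * a * b * x - 4 * a * b * t / (a ^ 2 + b ^ 2) ^ 2
              + 2 * Real.log (‖d‖ / ‖c‖))
            - (a ^ 2 - b ^ 2) / (a ^ 2 + b ^ 2))) := by
  have ha : a ≠ 0 := left_ne_zero_of_mul hab
  have hb : b ≠ 0 := right_ne_zero_of_mul hab
  intro x t hD
  set k : ℂ := (a : ℂ) + (b : ℂ) * I with hk
  have hkre : k.re = a := by simp [hk]
  have hkim : k.im = b := by simp [hk]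
  have hS : Complex.normSq k = a ^ 2 + b ^ 2 := by
    simp [Complex.normSq_apply, hkre, hkim]; ring
  have hSpos : (0:ℝ) < a ^ 2 + b ^ 2 := by positivity
  have hk0 : k ≠ 0 := by
    intro h
    rw [h, map_zero] at hS
    exact absurd hS.symm (ne_of_gt hSpos)
  have hk2 : k ^ 2 ≠ 0 := pow_ne_zero _ hk0
  set θ : ℝ := 2*a*b*x - 2*a*b*t/(a^2+b^2)^2 with hθ
  set φ : ℂ := k ^ 2 * (x:ℂ) + (t:ℂ) / k ^ 2 with hφ
  have hre1 : (-I * φ).re = θ := by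
    rw [hφ, hθ, hk]
    simp [Complex.div_re, Complex.div_im, Complex.normSq_apply, Complex.mul_re, Complex.mul_im,
      Complex.add_re, Complex.add_im, pow_two]
    have d1 : (a*a-b*b)*(a*a-b*b)+(a*b+b*a)*(a*b+b*a) = (a^2+b^2)^2 := by ring
    have d2 : (a*a+b*b)*(a*a+b*b) = ((a^2+b^2)^2 : ℝ) := by ring
    rw [d1, d2]
    have d3 : ((a^2+b^2)^2 : ℝ) ≠ 0 := pow_ne_zero _ (ne_of_gt hSpos)
    field_simp
    ring
  have hre2 : (I * φ).re = -θ := by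
    have h : (I * φ) = -(-I * φ) := by ring
    rw [h, Complex.neg_re, hre1]
  have hB : Complex.exp (-I * ((starRingEnd ℂ k) ^ 2 * (x : ℂ) + (t : ℂ) / (starRingEnd ℂ k) ^ 2))
      = (starRingEnd ℂ) (Complex.exp (I * φ)) := by
    rw [← Complex.exp_conj]
    congr 1
    rw [hφ]
    simp only [map_mul, map_add, map_div₀, map_pow, Complex.conj_I, Complex.conj_ofReal]
  set A : ℂ := Complex.exp (-I * φ) with hA
  set B : ℂ := Complex.exp (I * φ) with hBdef
  have hAB : A * B = 1 := by
    rw [hA, hBdef, ← Complex.exp_add]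
    norm_num
  have hnA : Complex.normSq A = Real.exp θ ^ 2 := by
    rw [Complex.normSq_eq_norm_sq, hA, Complex.norm_exp, hre1]
  have hnB : Complex.normSq B = Real.exp (-θ) ^ 2 := by
    rw [Complex.normSq_eq_norm_sq, hBdef, Complex.norm_exp, hre2]
  set P : ℝ := Complex.normSq c with hP
  set Q : ℝ := Complex.normSq d with hQ
  have hPpos : 0 < P := Complex.normSq_pos.mpr hc
  have hQpos : 0 < Q := Complex.normSq_pos.mpr hd
  set u : ℝ := Real.exp θ with hu
  set v : ℝ := Real.exp (-θ) with hv
  have hupos : 0 < u := Real.exp_pos _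
  have hvpos : 0 < v := Real.exp_pos _
  set E : ℂ := (starRingEnd ℂ) k * (Q:ℂ) * A - k * (P:ℂ) * ((starRingEnd ℂ) B) with hE
  set S : ℝ := a ^ 2 + b ^ 2 with hSdef
  set M : ℝ := S * (Q^2 * u^2 + P^2 * v^2) - 2 * (a^2 - b^2) * P * Q with hM
  have hnE : Complex.normSq E = M := by
    rw [hE, Complex.normSq_sub]
    have h1 : Complex.normSq ((starRingEnd ℂ) k * (Q:ℂ) * A) = S * Q^2 * u^2 := by
      rw [map_mul, map_mul, Complex.normSq_conj, hS, Complex.normSq_ofReal, hnA]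
      ring
    have h2 : Complex.normSq (k * (P:ℂ) * ((starRingEnd ℂ) B)) = S * P^2 * v^2 := by
      rw [map_mul, map_mul, Complex.normSq_conj, hS, Complex.normSq_ofReal, hnB]
      ring
    have h3 : ((starRingEnd ℂ) k * (Q:ℂ) * A * (starRingEnd ℂ) (k * (P:ℂ) * (starRingEnd ℂ) B)).re
        = (a^2 - b^2) * P * Q := by
      have hc1 : (starRingEnd ℂ) (k * (P:ℂ) * (starRingEnd ℂ) B) = (starRingEnd ℂ) k * (P:ℂ) * B := by
        simp [map_mul, Complex.conj_ofReal]
      rw [hc1]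
      have h4 : (starRingEnd ℂ) k * (Q:ℂ) * A * ((starRingEnd ℂ) k * (P:ℂ) * B)
          = ((starRingEnd ℂ) k) ^ 2 * ((P:ℂ) * (Q:ℂ)) * (A * B) := by ring
      rw [h4, hAB, mul_one]
      have hck : ((starRingEnd ℂ) k) ^ 2 = ((a^2 - b^2 : ℝ):ℂ) + ((-(2*a*b) : ℝ):ℂ) * I := by
        rw [hk]
        simp only [map_add, map_mul, Complex.conj_I, Complex.conj_ofReal]
        push_cast
        ring_nf
        simp [Complex.I_sq]
        ring
      rw [hck]
      simp [Complex.add_re, Complex.mul_re, Complex.mul_im, pow_two]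
      ring
    rw [h1, h2, h3, hM]
    ring
  have hDE : (((Complex.normSq k : ℝ) : ℂ) * E) ≠ 0 := by
    rw [hE, ← hB]
    exact hD
  have hE0 : E ≠ 0 := fun h => hDE (by rw [h, mul_zero])
  have hM0 : M ≠ 0 := by
    rw [← hnE]
    exact (Complex.normSq_pos.mpr hE0).ne'
  have hnum : Complex.normSq (c * d * (k ^ 2 - ((starRingEnd ℂ) k) ^ 2)) = P * Q * (16 * a^2 * b^2) := by
    rw [map_mul, map_mul, ← hP, ← hQ]
    have hkk : k ^ 2 - ((starRingEnd ℂ) k) ^ 2 = ((4*a*b : ℝ):ℂ) * I := by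
      rw [Complex.ext_iff]
      constructor <;>
        (simp [hk, Complex.mul_re, Complex.mul_im, pow_two]; try ring)
    rw [hkk, map_mul, Complex.normSq_ofReal, Complex.normSq_I]
    ring
  have hLHS : Complex.normSq (oneSoliton k c d x t) = P * Q * (16 * a^2 * b^2) / (S^2 * M) := by
    rw [oneSoliton, Complex.normSq_div, hnum]
    rw [← hφ, hB, ← hP, ← hQ, ← hE, map_mul, Complex.normSq_ofReal, hS, hnE]
    ring
  rw [hLHS]
  have hexpL : Real.exp (2 * Real.log (‖d‖ / ‖c‖)) = Q / P := by
    rw [show (2:ℝ) * Real.log (‖d‖ / ‖c‖)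
        = Real.log (‖d‖ / ‖c‖) + Real.log (‖d‖ / ‖c‖) from by ring,
      Real.exp_add, Real.exp_log (div_pos (norm_pos_iff.mpr hd) (norm_pos_iff.mpr hc))]
    rw [div_mul_div_comm, Complex.norm_mul_self_eq_normSq, Complex.norm_mul_self_eq_normSq, ← hP, ← hQ]
  have hexpnL : Real.exp (-(2 * Real.log (‖d‖ / ‖c‖))) = P / Q := by
    rw [Real.exp_neg, hexpL, inv_div]
  have harg : 4 * a * b * x - 4 * a * b * t / (a ^ 2 + b ^ 2) ^ 2
      + 2 * Real.log (‖d‖ / ‖c‖)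
      = (θ + θ) + 2 * Real.log (‖d‖ / ‖c‖) := by
    rw [hθ]; ring
  rw [harg, Real.cosh_eq, Real.exp_add, Real.exp_add, ← hu]
  rw [show -((θ + θ) + 2 * Real.log (‖d‖ / ‖c‖))
      = (-θ + -θ) + -(2 * Real.log (‖d‖ / ‖c‖)) from by ring]
  rw [Real.exp_add, Real.exp_add, ← hv, hexpL, hexpnL]
  have hS0 : S ≠ 0 := ne_of_gt hSpos
  have hP0 : P ≠ 0 := hPpos.ne'
  have hQ0 : Q ≠ 0 := hQpos.ne'
  have hden : (u * u * (Q / P) + v * v * (P / Q)) / 2 - (a ^ 2 - b ^ 2) / S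
      = M / (2 * P * Q * S) := by
    rw [hM]
    field_simp
  rw [hden, one_div_div, div_mul_div_comm,
    div_eq_div_iff (mul_ne_zero (pow_ne_zero 2 hS0) hM0) (mul_ne_zero (pow_ne_zero 3 hS0) hM0)]
  ring
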